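/- The fundamental group of the Klein bottle, Γ = ⟨x, y | x y x⁻¹ = y⁻¹⟩, is directly indecomposable. -/

import Mathlib

open scoped commutatorElement

@[ext]
structure Kl where
  a : ℤ
  b : ℤ

namespace Kl

instance : Mul Kl := ⟨fun g h => ⟨g.a + (g.b.negOnePow : ℤ) * h.a, g.b + h.b⟩⟩
instance : One Kl := ⟨⟨0, 0⟩⟩
instance : Inv Kl := ⟨fun g => ⟨-((g.b.negOnePow : ℤ) * g.a), -g.b⟩⟩

@[simp] theorem mul_a (g h : Kl) : (g * h).a = g.a + (g.b.negOnePow : ℤ) * h.a := rfl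
@[simp] theorem mul_b (g h : Kl) : (g * h).b = g.b + h.b := rfl
@[simp] theorem one_a : (1 : Kl).a = 0 := rfl
@[simp] theorem one_b : (1 : Kl).b = 0 := rfl
@[simp] theorem inv_a (g : Kl) : (g⁻¹).a = -((g.b.negOnePow : ℤ) * g.a) := rfl
@[simp] theorem inv_b (g : Kl) : (g⁻¹).b = -g.b := rfl

instance : Group Kl where
  mul_assoc g h k := by ext <;> simp [Int.negOnePow_add] <;> ring
  one_mul g := by ext <;> simp
  mul_one g := by ext <;> simp
  inv_mul_cancel g := by ext <;> simp [Int.negOnePow_neg]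

theorem eq_one_iff (g : Kl) : g = 1 ↔ g.a = 0 ∧ g.b = 0 := by
  constructor
  · rintro rfl; exact ⟨rfl, rfl⟩
  · rintro ⟨h1, h2⟩; ext <;> simpa

theorem pow_vert (m : ℤ) (n : ℕ) : (⟨0, m⟩ : Kl) ^ n = ⟨0, n * m⟩ := by
  induction n with
  | zero => ext <;> simp
  | succ n ih => rw [pow_succ, ih]; ext <;> simp <;> ring

theorem zpow_vert (m t : ℤ) : (⟨0, m⟩ : Kl) ^ t = ⟨0, t * m⟩ := by
  cases t with
  | ofNat n => simpa using pow_vert m n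
  | negSucc n =>
      rw [zpow_negSucc, pow_vert]
      ext <;> simp [Int.negSucc_eq] <;> ring

theorem pow_horiz (s : ℤ) (n : ℕ) : (⟨s, 0⟩ : Kl) ^ n = ⟨n * s, 0⟩ := by
  induction n with
  | zero => ext <;> simp
  | succ n ih => rw [pow_succ, ih]; ext <;> simp <;> ring

theorem zpow_horiz (s t : ℤ) : (⟨s, 0⟩ : Kl) ^ t = ⟨t * s, 0⟩ := by
  cases t with
  | ofNat n => simpa using pow_horiz s n
  | negSucc n =>
      rw [zpow_negSucc, pow_horiz]
      ext <;> simp [Int.negSucc_eq] <;> ring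

theorem commutator_b (g h : Kl) : (⁅g, h⁆).b = 0 := by
  simp [commutatorElement_def]

def X : Kl := ⟨0, 1⟩
def Y : Kl := ⟨1, 0⟩

end Kl

def kleinRels : Set (FreeGroup (Fin 2)) :=
  {FreeGroup.of 0 * FreeGroup.of 1 * (FreeGroup.of 0)⁻¹ * FreeGroup.of 1}
namespace KleinAux

abbrev Γ := PresentedGroup kleinRels

def x : Γ := PresentedGroup.of 0
def y : Γ := PresentedGroup.of 1

theorem rel : x * y * x⁻¹ * y = 1 := by
  have hm : (FreeGroup.of 0 * FreeGroup.of 1 * (FreeGroup.of 0)⁻¹ * FreeGroup.of 1 :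
      FreeGroup (Fin 2)) ∈ Subgroup.normalClosure kleinRels :=
    Subgroup.subset_normalClosure rfl
  have : x * y * x⁻¹ * y =
      PresentedGroup.mk kleinRels
        (FreeGroup.of 0 * FreeGroup.of 1 * (FreeGroup.of 0)⁻¹ * FreeGroup.of 1) := by
    simp [x, y, PresentedGroup.of, map_mul, map_inv]
  rw [this]
  exact (QuotientGroup.eq_one_iff _).mpr hm

theorem conj_y : x * y * x⁻¹ = y⁻¹ :=
  eq_inv_of_mul_eq_one_left (by have := rel; group at this ⊢; exact this)

theorem semiconj : SemiconjBy x y y⁻¹ := by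
  unfold SemiconjBy
  rw [← conj_y]; group

theorem semiconj_inv : SemiconjBy x⁻¹ y y⁻¹ := by
  have h := semiconj.inv_symm_left
  simpa using h.inv_right

theorem xy_comm (c : ℤ) : x * y ^ c = y ^ (-c) * x := by
  have h := semiconj.zpow_right c
  rw [SemiconjBy] at h
  rw [h, inv_zpow, zpow_neg]

theorem x_inv_y_comm (c : ℤ) : x⁻¹ * y ^ c = y ^ (-c) * x⁻¹ := by
  have h := semiconj_inv.zpow_right c
  rw [SemiconjBy] at h
  rw [h, inv_zpow, zpow_neg]

theorem conj_pow (b : ℤ) : ∀ c : ℤ, x ^ b * y ^ c = y ^ ((b.negOnePow : ℤ) * c) * x ^ b := by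
  induction b using Int.induction_on with
  | zero => intro c; simp
  | succ n ih =>
      intro c
      have hexp : ((((n : ℤ) + 1)).negOnePow * c : ℤ) = (((n : ℤ)).negOnePow : ℤ) * (-c) := by
        rw [Int.negOnePow_succ]; push_cast; ring
      calc x ^ ((n : ℤ) + 1) * y ^ c = x ^ (n : ℤ) * (x * y ^ c) := by
            rw [zpow_add, zpow_one, mul_assoc]
        _ = x ^ (n : ℤ) * y ^ (-c) * x := by rw [xy_comm c, mul_assoc]
        _ = y ^ (((n : ℤ)).negOnePow * (-c) : ℤ) * x ^ ((n : ℤ) + 1) := by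
            rw [ih (-c), mul_assoc, ← zpow_add_one]
        _ = y ^ ((((n : ℤ) + 1)).negOnePow * c : ℤ) * x ^ ((n : ℤ) + 1) := by rw [hexp]
  | pred n ih =>
      intro c
      have hexp : ((((-n : ℤ) - 1)).negOnePow * c : ℤ) = (((-n : ℤ)).negOnePow : ℤ) * (-c) := by
        rw [Int.negOnePow_sub]; push_cast; simp
      calc x ^ ((-n : ℤ) - 1) * y ^ c = x ^ (-n : ℤ) * (x⁻¹ * y ^ c) := by
            rw [zpow_sub, zpow_one, mul_assoc]
        _ = x ^ (-n : ℤ) * y ^ (-c) * x⁻¹ := by rw [x_inv_y_comm c, mul_assoc]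
        _ = y ^ (((-n : ℤ)).negOnePow * (-c) : ℤ) * x ^ ((-n : ℤ) - 1) := by
            rw [ih (-c), mul_assoc, ← zpow_sub_one]
        _ = y ^ ((((-n : ℤ) - 1)).negOnePow * c : ℤ) * x ^ ((-n : ℤ) - 1) := by rw [hexp]


open Kl in
def fmap : Γ →* Kl :=
  PresentedGroup.toGroup (f := fun i : Fin 2 => if i = 0 then X else Y) (by
    intro r hr
    rw [kleinRels, Set.mem_singleton_iff] at hr
    subst hr
    simp only [map_mul, map_inv, FreeGroup.lift_apply_of]
    norm_num [X, Y]
    ext <;> simp)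

@[simp] theorem fmap_x : fmap x = Kl.X := by
  simp [fmap, x]

@[simp] theorem fmap_y : fmap y = Kl.Y := by
  simp [fmap, y]

def gmap : Kl →* Γ :=
  MonoidHom.mk' (fun p => y ^ p.a * x ^ p.b) (by
    intro p q
    show y ^ (p.a + (p.b.negOnePow : ℤ) * q.a) * x ^ (p.b + q.b) =
      (y ^ p.a * x ^ p.b) * (y ^ q.a * x ^ q.b)
    rw [mul_assoc, ← mul_assoc (x ^ p.b), conj_pow p.b q.a, mul_assoc,
      ← zpow_add, ← mul_assoc, ← zpow_add])

theorem gmap_apply (p : Kl) : gmap p = y ^ p.a * x ^ p.b := rfl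

def klEquiv : Γ ≃* Kl :=
  MonoidHom.toMulEquiv fmap gmap
    (by
      ext i
      fin_cases i <;>
        simp [gmap_apply, fmap, Kl.X, Kl.Y, x, y])
    (by
      ext p
      · simp [gmap_apply, map_mul, map_zpow, fmap_x, fmap_y,
          Kl.zpow_horiz, Kl.zpow_vert, Kl.X, Kl.Y]
      · simp [gmap_apply, map_mul, map_zpow, fmap_x, fmap_y,
          Kl.zpow_horiz, Kl.zpow_vert, Kl.X, Kl.Y])

end KleinAux

namespace KleinAux

instance : Nontrivial Kl :=
  ⟨⟨⟨1, 0⟩, 1, fun h => by simpa using congrArg Kl.a h⟩⟩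

theorem aux1 {G₁ G₂ : Type} [Group G₁] [Group G₂] (e : Kl ≃* G₁ × G₂)
    (u v : G₁) (huv : u * v ≠ v * u) (w z : G₂) (hwz : w * z ≠ z * w) : False := by
  set a : Kl := e.symm (⁅u, v⁆, 1) with ha
  set b : Kl := e.symm (1, ⁅w, z⁆) with hb
  have hcu : ((⁅u, v⁆ : G₁), (1 : G₂)) = ⁅((u, 1) : G₁ × G₂), ((v, 1) : G₁ × G₂)⁆ :=
    map_commutatorElement (MonoidHom.inl G₁ G₂) u v
  have hcw : ((1 : G₁), (⁅w, z⁆ : G₂)) = ⁅((1, w) : G₁ × G₂), ((1, z) : G₁ × G₂)⁆ :=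
    map_commutatorElement (MonoidHom.inr G₁ G₂) w z
  have hab : a.b = 0 := by
    rw [ha, hcu, map_commutatorElement]; exact Kl.commutator_b _ _
  have hbb : b.b = 0 := by
    rw [hb, hcw, map_commutatorElement]; exact Kl.commutator_b _ _
  have hane : a ≠ 1 := by
    intro h
    rw [ha] at h
    have : ((⁅u, v⁆ : G₁), (1 : G₂)) = (1 : G₁ × G₂) := by
      have := congrArg e h; simpa using this
    exact huv (commutatorElement_eq_one_iff_mul_comm.mp (congrArg Prod.fst this))
  have hbne : b ≠ 1 := by
    intro h
    rw [hb] at h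
    have : ((1 : G₁), (⁅w, z⁆ : G₂)) = (1 : G₁ × G₂) := by
      have := congrArg e h; simpa using this
    exact hwz (commutatorElement_eq_one_iff_mul_comm.mp (congrArg Prod.snd this))
  have has : a = ⟨a.a, 0⟩ := by ext <;> simp [hab]
  have hbs : b = ⟨b.a, 0⟩ := by ext <;> simp [hbb]
  have haa : a.a ≠ 0 := fun h => hane (a.eq_one_iff.mpr ⟨h, hab⟩)
  have hba : b.a ≠ 0 := fun h => hbne (b.eq_one_iff.mpr ⟨h, hbb⟩)
  have hpow : a ^ b.a = b ^ a.a := by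
    rw [has, hbs, Kl.zpow_horiz, Kl.zpow_horiz, mul_comm]
  have h1 : (⁅u, v⁆ : G₁) ^ b.a = 1 := by
    have := congrArg (fun k => (e k).1) hpow
    simpa [map_zpow, ha, hb] using this
  have h2 : e (a ^ b.a) = 1 := by
    rw [map_zpow, ha, MulEquiv.apply_symm_apply]
    have : ((⁅u, v⁆, 1) : G₁ × G₂) ^ b.a = ((⁅u, v⁆ : G₁) ^ b.a, (1 : G₂) ^ b.a) := rfl
    rw [this, h1]
    simp
  have h3 : a ^ b.a = 1 := by
    apply e.injective
    simpa using h2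
  rw [has, Kl.zpow_horiz] at h3
  have := (Kl.eq_one_iff _).mp h3
  simp at this
  rcases this with h | h
  · exact hba h
  · exact haa h

theorem aux2 {G₁ G₂ : Type} [Group G₁] [Group G₂] [Nontrivial G₂] (e : Kl ≃* G₁ × G₂)
    (hcomm : ∀ u v : G₂, u * v = v * u) : False := by
  have hcent : ∀ w : G₂, (e.symm (1, w)).a = 0 ∧ Even (e.symm (1, w)).b := by
    intro w
    have hcom : ∀ k : Kl, e.symm (1, w) * k = k * e.symm (1, w) := by
      intro k
      apply e.injective
      rw [map_mul, map_mul, MulEquiv.apply_symm_apply]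
      ext
      · simp
      · simp [hcomm]
    constructor
    · have h := congrArg Kl.a (hcom ⟨0, 1⟩)
      simp [Int.negOnePow_one] at h
      omega
    · have h := congrArg Kl.a (hcom ⟨1, 0⟩)
      simp at h
      have h2 : ((e.symm (1, w)).b.negOnePow : ℤ) = 1 := by linarith
      rw [← Int.negOnePow_eq_one_iff]
      exact Units.ext (by simpa using h2)
  obtain ⟨g₂, hg₂⟩ := exists_ne (1 : G₂)
  obtain ⟨hba, hbb⟩ := hcent g₂
  obtain ⟨hca, hcb⟩ := hcent ((e (⟨0, 1⟩ : Kl)).2)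
  set b : Kl := e.symm (1, g₂) with hbdef
  set c : Kl := e.symm (1, (e (⟨0, 1⟩ : Kl)).2) with hcdef
  have hbne : b ≠ 1 := by
    intro h
    apply hg₂
    have := congrArg e h
    rw [hbdef] at this
    simpa using congrArg Prod.snd this
  have hbb0 : b.b ≠ 0 := fun h => hbne (b.eq_one_iff.mpr ⟨hba, h⟩)
  have hbX : b = (⟨0, 1⟩ : Kl) ^ b.b := by
    rw [Kl.zpow_vert]
    ext
    · exact hba
    · simp
  have h1 : e b = (1, g₂) := by rw [hbdef, MulEquiv.apply_symm_apply]
  have h2 : e b = (e ⟨0, 1⟩) ^ b.b := by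
    conv_lhs => rw [hbX]
    rw [map_zpow]
  have h3 : ((1 : G₁), g₂) = ((1 : G₁), ((e (⟨0, 1⟩ : Kl)).2) ^ b.b) := by
    rw [← h1, h2]
    ext
    · have hcl : (e b).1 = 1 := by rw [h1]
      rw [← h2]
      exact hcl
    · exact (map_zpow (MonoidHom.snd G₁ G₂) (e ⟨0, 1⟩) b.b)
  have h4 : ((1 : G₁), ((e (⟨0, 1⟩ : Kl)).2) ^ b.b) = ((1, (e (⟨0, 1⟩ : Kl)).2) : G₁ × G₂) ^ b.b := by
    ext
    · simpa using (map_zpow (MonoidHom.fst G₁ G₂) ((1 : G₁), (e (⟨0, 1⟩ : Kl)).2) b.b).symm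
    · exact (map_zpow (MonoidHom.snd G₁ G₂) _ b.b).symm
  have hkey : b = c ^ b.b := by
    conv_lhs => rw [hbdef]
    rw [h3, h4, map_zpow]
  have hform : c = (⟨0, c.b⟩ : Kl) := by
    ext
    · exact hca
    · rfl
  rw [hform, Kl.zpow_vert] at hkey
  have h5 : b.b = b.b * c.b := by simpa using congrArg Kl.b hkey
  have hc1 : c.b = 1 := mul_left_cancel₀ hbb0 (by rw [mul_one]; exact h5.symm)
  rw [hc1] at hcb
  exact (Int.not_odd_iff_even.mpr hcb) odd_one


end KleinAux

theorem klein_bottle_group_indecomposable :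
    Nontrivial (PresentedGroup kleinRels) ∧
    ∀ (G₁ G₂ : Type) [Group G₁] [Group G₂],
      (PresentedGroup kleinRels ≃* G₁ × G₂) → Subsingleton G₁ ∨ Subsingleton G₂ := by
  constructor
  · exact KleinAux.klEquiv.toEquiv.nontrivial
  · intro G₁ G₂ _ _ h
    by_contra hcon
    push_neg at hcon
    obtain ⟨h1, h2⟩ := hcon
    have e : Kl ≃* G₁ × G₂ := KleinAux.klEquiv.symm.trans h
    by_cases hc2 : ∀ u v : G₂, u * v = v * u
    · exact KleinAux.aux2 e hc2
    · push_neg at hc2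
      obtain ⟨w, z, hwz⟩ := hc2
      by_cases hc1 : ∀ u v : G₁, u * v = v * u
      · exact KleinAux.aux2 (e.trans (MulEquiv.prodComm : G₁ × G₂ ≃* G₂ × G₁)) hc1
      · push_neg at hc1
        obtain ⟨u, v, huv⟩ := hc1
        exact KleinAux.aux1 e u v huv w z hwz
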